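/- The function h(x) = log((1+x)/(1−x)) / (1/(1−x) − 1/(1+x)) is strictly decreasing on the interval (0, 1). -/

import Mathlib

open Real Set

lemma hasDerivAt_N {x : ℝ} (h1 : -1 < x) (h2 : x < 1) :
    HasDerivAt (fun x : ℝ => Real.log ((1 + x) / (1 - x))) (2 / (1 - x ^ 2)) x := by
  have hv : (0:ℝ) < 1 - x := by linarith
  have hu : (0:ℝ) < 1 + x := by linarith
  have hU : HasDerivAt (fun x : ℝ => 1 + x) 1 x := (hasDerivAt_id x).const_add 1
  have hV : HasDerivAt (fun x : ℝ => 1 - x) (-1) x := (hasDerivAt_id x).const_sub 1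
  have hq := hU.div hV hv.ne'
  have hl := hq.log (div_pos hu hv).ne'
  refine hl.congr_deriv ?_
  have h2 : (1:ℝ) - x ^ 2 ≠ 0 := by nlinarith
  simp only [Pi.div_apply]
  field_simp
  ring

lemma hasDerivAt_D {x : ℝ} (h1 : -1 < x) (h2 : x < 1) :
    HasDerivAt (fun x : ℝ => 1 / (1 - x) - 1 / (1 + x))
      (1 / (1 - x) ^ 2 + 1 / (1 + x) ^ 2) x := by
  have hv : (0:ℝ) < 1 - x := by linarith
  have hu : (0:ℝ) < 1 + x := by linarith
  have hU : HasDerivAt (fun x : ℝ => 1 + x) 1 x := (hasDerivAt_id x).const_add 1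
  have hV : HasDerivAt (fun x : ℝ => 1 - x) (-1) x := (hasDerivAt_id x).const_sub 1
  have hd := ((hasDerivAt_const x (1:ℝ)).div hV hv.ne').sub
    ((hasDerivAt_const x (1:ℝ)).div hU hu.ne')
  refine hd.congr_deriv ?_
  ring

lemma two_mul_lt_log {x : ℝ} (hx : x ∈ Set.Ioo (0:ℝ) 1) :
    2 * x < Real.log ((1 + x) / (1 - x)) := by
  have hmono : StrictMonoOn (fun x : ℝ => Real.log ((1 + x) / (1 - x)) - 2 * x)
      (Set.Ico (0:ℝ) 1) := by
    apply strictMonoOn_of_deriv_pos (convex_Ico 0 1)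
    · apply ContinuousOn.sub
      · apply ContinuousOn.log
        · apply ContinuousOn.div (by fun_prop) (by fun_prop)
          intro y hy
          simp only [Set.mem_Ico] at hy
          intro h; linarith [hy.2, h]
        · intro y hy
          simp only [Set.mem_Ico] at hy
          have : (0:ℝ) < 1 - y := by linarith [hy.2]
          have : (0:ℝ) < 1 + y := by linarith [hy.1]
          positivity
      · fun_prop
    · intro y hy
      rw [interior_Ico] at hy
      obtain ⟨hy0, hy1⟩ := hy
      have hd : HasDerivAt (fun x : ℝ => Real.log ((1 + x) / (1 - x)) - 2 * x)
          (2 / (1 - y ^ 2) - 2) y := by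
        have := (hasDerivAt_N (by linarith) hy1).sub ((hasDerivAt_id y).const_mul 2)
        refine this.congr_deriv ?_
        ring
      rw [hd.deriv]
      have h1 : 0 < 1 - y ^ 2 := by nlinarith
      rw [sub_pos, lt_div_iff₀ h1]
      nlinarith
  have h01 : (0:ℝ) ∈ Set.Ico (0:ℝ) 1 := ⟨le_refl 0, one_pos⟩
  have hxm : x ∈ Set.Ico (0:ℝ) 1 := ⟨hx.1.le, hx.2⟩
  have := hmono h01 hxm hx.1
  simp only [add_zero, sub_zero, Real.log_one, mul_zero, div_one] at this
  linarith

theorem h_strictAntiOn :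
    StrictAntiOn (fun x : ℝ => Real.log ((1 + x) / (1 - x)) / (1 / (1 - x) - 1 / (1 + x)))
      (Set.Ioo (0 : ℝ) 1) := by
  have key : ∀ x ∈ Set.Ioo (0:ℝ) 1,
      HasDerivAt (fun x : ℝ => Real.log ((1 + x) / (1 - x)) / (1 / (1 - x) - 1 / (1 + x)))
        ((2 / (1 - x ^ 2) * (1 / (1 - x) - 1 / (1 + x)) -
          Real.log ((1 + x) / (1 - x)) * (1 / (1 - x) ^ 2 + 1 / (1 + x) ^ 2)) /
          (1 / (1 - x) - 1 / (1 + x)) ^ 2) x := by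
    intro x hx
    obtain ⟨hx0, hx1⟩ := hx
    have hv : (0:ℝ) < 1 - x := by linarith
    have hu : (0:ℝ) < 1 + x := by linarith
    have hDpos : 0 < 1 / (1 - x) - 1 / (1 + x) := by
      rw [sub_pos, div_lt_div_iff₀ hu hv]
      linarith
    exact (hasDerivAt_N (by linarith) hx1).div (hasDerivAt_D (by linarith) hx1) hDpos.ne'
  apply strictAntiOn_of_deriv_neg (convex_Ioo 0 1)
  · exact fun x hx => (key x hx).continuousAt.continuousWithinAt
  · rw [interior_Ioo]
    intro x hx
    rw [(key x hx).deriv]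
    obtain ⟨hx0, hx1⟩ := hx
    have hv : (0:ℝ) < 1 - x := by linarith
    have hu : (0:ℝ) < 1 + x := by linarith
    have hL := two_mul_lt_log ⟨hx0, hx1⟩
    have hDpos : 0 < 1 / (1 - x) - 1 / (1 + x) := by
      rw [sub_pos, div_lt_div_iff₀ hu hv]
      linarith
    apply div_neg_of_neg_of_pos _ (by positivity)
    set L := Real.log ((1 + x) / (1 - x)) with hLdef
    have hsq : (0:ℝ) < 1 - x ^ 2 := by nlinarith
    have heq : 2 / (1 - x ^ 2) * (1 / (1 - x) - 1 / (1 + x)) -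
        L * (1 / (1 - x) ^ 2 + 1 / (1 + x) ^ 2) =
        (4 * x - 2 * L * (1 + x ^ 2)) / (1 - x ^ 2) ^ 2 := by
      field_simp
      ring
    rw [heq]
    apply div_neg_of_neg_of_pos _ (by positivity)
    nlinarith
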